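/- Let h, w : ℤ⁺ → ℤ⁺ with h ≻ 1 and w ≻ 1. If w ≺ √h, then L[h, w] ∼ w²·ln(√h / w); that is, L[h(n), w(n)] / (w(n)²·ln(√(h(n))/w(n))) → 1 as n → ∞. -/

import Mathlib

open Filter

/-- A Kostant picture of height `η`. -/
def IsKostant {w : ℕ} (η : Fin w → ℕ) (c : Fin w → Fin w → ℕ) : Prop :=
  (∀ i j : Fin w, j < i → c i j = 0) ∧
  ∀ m : Fin w, (∑ i : Fin w, ∑ j : Fin w, (if i ≤ m ∧ m ≤ j then c i j else 0)) = η m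

/-- Kostant's partition function. -/
noncomputable def KPF {w : ℕ} (η : Fin w → ℕ) : ℕ :=
  Set.ncard {c : Fin w → Fin w → ℕ | IsKostant η c}

/-- `L[h,w] = ln KPF[(h,…,h)]` for the constant tuple of length `w`. -/
noncomputable def Lbox (h w : ℕ) : ℝ := Real.log (KPF (fun _ : Fin w => h))

open Finset

lemma finInner {M} [AddCommMonoid M] (W v : ℕ) (g : ℕ → M) :
    ∑ j : Fin W, (if v ≤ j.val then g j.val else 0) = ∑ j ∈ Finset.Ico v W, g j := by
  rw [Fin.sum_univ_eq_sum_range (fun j => if v ≤ j then g j else 0) W]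
  rcases le_or_gt v W with h | h
  · rw [Finset.range_eq_Ico, ← Finset.sum_Ico_consecutive _ (Nat.zero_le v) h]
    rw [Finset.sum_eq_zero (fun j hj => by
      rw [Finset.mem_Ico] at hj; simp [Nat.not_le.2 hj.2]), zero_add]
    exact Finset.sum_congr rfl fun j hj => by
      rw [Finset.mem_Ico] at hj; simp [hj.1]
  · rw [Finset.Ico_eq_empty (by omega), Finset.sum_empty]
    refine Finset.sum_eq_zero fun j hj => ?_
    rw [Finset.mem_range] at hj
    rw [if_neg (by omega)]

lemma pairSum {M} [AddCommMonoid M] (W : ℕ) (g : ℕ → M) :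
    ∑ i : Fin W, ∑ j : Fin W, (if i ≤ j then g (j.val - i.val + 1) else 0)
      = ∑ i ∈ Finset.range W, ∑ k ∈ Finset.range (W - i), g (k + 1) := by
  have h1 : ∀ i : Fin W, ∑ j : Fin W, (if i ≤ j then g (j.val - i.val + 1) else 0)
      = ∑ k ∈ Finset.range (W - i.val), g (k + 1) := by
    intro i
    have := finInner W i.val (fun u => g (u - i.val + 1))
    simp only [Fin.le_def] at *
    rw [this, Finset.sum_Ico_eq_sum_range]
    exact Finset.sum_congr rfl fun k _ => by congr 1; omega
  rw [Finset.sum_congr rfl (fun i _ => h1 i)]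
  exact Fin.sum_univ_eq_sum_range (fun v => ∑ k ∈ Finset.range (W - v), g (k + 1)) W

lemma cardLt (W : ℕ) :
    ((Finset.univ.filter (fun p : Fin W × Fin W => p.1 < p.2)).card) * 2 = W * W - W := by
  rw [Finset.card_filter]
  rw [Fintype.sum_prod_type]
  have h1 : ∀ i : Fin W, (∑ j : Fin W, if (i, j).1 < (i, j).2 then 1 else 0)
      = W - (i.val + 1) := by
    intro i
    have := finInner W (i.val + 1) (fun _ => (1 : ℕ))
    simp only [Fin.lt_def] at *
    rw [show (∑ j : Fin W, if i.val < j.val then 1 else 0)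
        = ∑ j : Fin W, (if i.val + 1 ≤ j.val then (fun _ => (1:ℕ)) j.val else 0) by
      exact Finset.sum_congr rfl fun j _ => rfl, this,
      Finset.sum_const, Nat.card_Ico, smul_eq_mul, mul_one]
  rw [Finset.sum_congr rfl (fun i _ => h1 i),
    Fin.sum_univ_eq_sum_range (fun v => W - (v + 1)) W]
  have h2 : ∑ v ∈ Finset.range W, (W - (v + 1)) = ∑ v ∈ Finset.range W, v := by
    rw [← Finset.sum_range_reflect]
    exact Finset.sum_congr rfl fun v hv => by rw [Finset.mem_range] at hv; omega
  rw [h2, Finset.sum_range_id_mul_two]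
  cases W with
  | zero => simp
  | succ n => rw [Nat.succ_sub_one, Nat.mul_succ, Nat.add_sub_cancel]

lemma sumN (W : ℕ) : (∑ i ∈ Finset.range W, (W - i)) * 2 = W * W + W := by
  have h2 : ∑ v ∈ Finset.range W, (W - v) = ∑ v ∈ Finset.range W, (v + 1) := by
    rw [← Finset.sum_range_reflect]
    exact Finset.sum_congr rfl fun v hv => by rw [Finset.mem_range] at hv; omega
  rw [h2, Finset.sum_add_distrib, Finset.sum_const, Finset.card_range, smul_eq_mul, mul_one,
    add_mul, Finset.sum_range_id_mul_two]
  cases W with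
  | zero => simp
  | succ n =>
    rw [Nat.succ_sub_one, Nat.mul_succ, Nat.succ_mul]
    rw [show (n+1)*(n+1) = n*n + n + (n+1) by ring]
    omega

lemma sum_log_lb (m : ℕ) :
    (m : ℝ) * Real.log m - m ≤ ∑ k ∈ Finset.range m, Real.log (k + 1) := by
  induction m with
  | zero => simp
  | succ n ih =>
    rw [Finset.sum_range_succ]
    have key : ((n+1 : ℕ) : ℝ) * Real.log (n+1) - (n+1) ≤
        ((n:ℝ) * Real.log n - n) + Real.log ((n:ℝ) + 1) := by
      rcases Nat.eq_zero_or_pos n with rfl | hn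
      · simp
      · have hn' : (0:ℝ) < n := by positivity
        have h1 : Real.log ((n:ℝ)+1) - Real.log n ≤ 1 / n := by
          rw [← Real.log_div (by positivity) (by positivity)]
          have := Real.log_le_sub_one_of_pos (x := ((n:ℝ)+1)/n) (by positivity)
          calc Real.log (((n:ℝ)+1)/n) ≤ ((n:ℝ)+1)/n - 1 := this
            _ = 1 / n := by field_simp; ring
        have h2 : (n:ℝ) * (Real.log ((n:ℝ)+1) - Real.log n) ≤ 1 := by
          calc (n:ℝ) * (Real.log ((n:ℝ)+1) - Real.log n) ≤ (n:ℝ) * (1/n) :=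
              mul_le_mul_of_nonneg_left h1 (le_of_lt hn')
            _ = 1 := by field_simp
        push_cast
        nlinarith [h2]
    calc ((n+1 : ℕ) : ℝ) * Real.log (↑(n+1)) - ↑(n+1)
        ≤ ((n:ℝ) * Real.log n - n) + Real.log ((n:ℝ)+1) := by push_cast at key ⊢; convert key using 3 <;> push_cast <;> ring
      _ ≤ (∑ k ∈ Finset.range n, Real.log (k+1)) + Real.log ((n:ℝ)+1) := by
          gcongr
      _ = (∑ k ∈ Finset.range n, Real.log (↑k+1)) + Real.log (↑(n:ℕ)+1) := by norm_num

lemma xlogWx_le (x Wr : ℝ) (hx : 0 < x) (hxW : x ≤ Wr) :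
    x * Real.log Wr - x * Real.log x ≤ Wr := by
  have h : Real.log Wr - Real.log x = Real.log (Wr / x) := by
    rw [Real.log_div (by linarith) (ne_of_gt hx)]
  have hW : 0 < Wr := lt_of_lt_of_le hx hxW
  have h2 : Real.log (Wr / x) ≤ Wr / x := by
    have := Real.log_le_sub_one_of_pos (x := Wr / x) (by positivity)
    linarith [div_pos hW hx]
  calc x * Real.log Wr - x * Real.log x = x * (Real.log (Wr/x)) := by rw [← h]; ring
    _ ≤ x * (Wr / x) := mul_le_mul_of_nonneg_left h2 (le_of_lt hx)
    _ = Wr := by field_simp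

lemma isKostant_le {W H : ℕ} {c : Fin W → Fin W → ℕ}
    (hc : IsKostant (fun _ : Fin W => H) c) (i j : Fin W) : c i j ≤ H := by
  rcases le_or_gt i j with hij | hij
  · have h2 : (∑ i' : Fin W, ∑ j' : Fin W, (if i' ≤ i ∧ i ≤ j' then c i' j' else 0)) = H :=
      hc.2 i
    have hstep1 : c i j ≤ ∑ j' : Fin W, (if i ≤ i ∧ i ≤ j' then c i j' else 0) := by
      have : c i j = if i ≤ i ∧ i ≤ j then c i j else 0 := by simp [hij]
      rw [this]
      exact Finset.single_le_sum (f := fun j' => if i ≤ i ∧ i ≤ j' then c i j' else 0)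
        (fun _ _ => by positivity) (Finset.mem_univ j)
    have hstep2 : (∑ j' : Fin W, (if i ≤ i ∧ i ≤ j' then c i j' else 0)) ≤
        ∑ i' : Fin W, ∑ j' : Fin W, (if i' ≤ i ∧ i ≤ j' then c i' j' else 0) :=
      Finset.single_le_sum (f := fun i' => ∑ j' : Fin W, (if i' ≤ i ∧ i ≤ j' then c i' j' else 0))
        (fun _ _ => by positivity) (Finset.mem_univ i)
    omega
  · rw [hc.1 i j hij]; exact Nat.zero_le _

lemma kostant_finite (W H : ℕ) : {c : Fin W → Fin W → ℕ | IsKostant (fun _ : Fin W => H) c}.Finite := by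
  apply Set.Finite.subset (Set.Finite.pi (fun i => Set.Finite.pi (fun j => Set.finite_Iic H)))
  intro c hc
  simp only [Set.mem_pi, Set.mem_univ, Set.mem_Iic, forall_true_left]
  exact fun i j => isKostant_le hc i j

lemma weight_eq {W H : ℕ} {c : Fin W → Fin W → ℕ}
    (hc : IsKostant (fun _ : Fin W => H) c) :
    ∑ i : Fin W, ∑ j : Fin W, (Finset.Icc i j).card * c i j = W * H := by
  have key : ∑ m : Fin W, ∑ i : Fin W, ∑ j : Fin W,
      (if i ≤ m ∧ m ≤ j then c i j else 0) = W * H := by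
    rw [Finset.sum_congr rfl (fun m _ => hc.2 m)]
    simp [Finset.sum_const, Finset.card_univ, mul_comm]
  have swap : (∑ m : Fin W, ∑ i : Fin W, ∑ j : Fin W, (if i ≤ m ∧ m ≤ j then c i j else 0))
      = ∑ i : Fin W, ∑ j : Fin W, ∑ m : Fin W, (if i ≤ m ∧ m ≤ j then c i j else 0) := by
    rw [Finset.sum_comm]
    exact Finset.sum_congr rfl fun i _ => Finset.sum_comm
  rw [← key, swap]
  refine Finset.sum_congr rfl fun i _ => Finset.sum_congr rfl fun j _ => ?_
  have hfil : (Finset.univ.filter (fun m : Fin W => i ≤ m ∧ m ≤ j)) = Finset.Icc i j := by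
    ext m; simp [Finset.mem_Icc]
  rw [← hfil, ← Finset.sum_filter (fun m => i ≤ m ∧ m ≤ j) (fun _ => c i j),
    Finset.sum_const, smul_eq_mul]

lemma kpf_lower (W H : ℕ) :
    (H / (W * W) + 1) ^ ((Finset.univ.filter (fun p : Fin W × Fin W => p.1 < p.2)).card)
      ≤ KPF (fun _ : Fin W => H) := by
  classical
  set K := H / (W * W) with hK
  set B' : Finset (Fin W → Fin W → ℕ) :=
    Fintype.piFinset fun i => Fintype.piFinset fun j =>
      if i < j then Finset.range (K + 1) else {0} with hB'
  -- cardinality of B'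
  have hcard : B'.card = (K + 1) ^ ((Finset.univ.filter
      (fun p : Fin W × Fin W => p.1 < p.2)).card) := by
    rw [hB', Fintype.card_piFinset]
    have : ∀ i : Fin W, (Fintype.piFinset fun j =>
        if i < j then Finset.range (K + 1) else ({0} : Finset ℕ)).card
        = ∏ j : Fin W, (if i < j then K + 1 else 1) := by
      intro i
      rw [Fintype.card_piFinset]
      exact Finset.prod_congr rfl fun j _ => by
        by_cases h : i < j <;> simp [h]
    rw [Finset.prod_congr rfl fun i _ => this i, ← Fintype.prod_prod_type']
    rw [← Finset.prod_filter (fun p : Fin W × Fin W => p.1 < p.2) (fun _ => K + 1)]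
    rw [Finset.prod_const]
  -- the map
  set T : Fin W → (Fin W → Fin W → ℕ) → ℕ := fun m d =>
    ∑ i : Fin W, ∑ j : Fin W, (if i ≤ m ∧ m ≤ j ∧ i < j then d i j else 0) with hT
  set Φ : (Fin W → Fin W → ℕ) → (Fin W → Fin W → ℕ) := fun d i j =>
    if i < j then d i j else if i = j then H - T i d else 0 with hΦ
  have hmemB' : ∀ d ∈ B', (∀ i j : Fin W, i < j → d i j ≤ K) ∧
      (∀ i j : Fin W, ¬ i < j → d i j = 0) := by
    intro d hd
    rw [hB', Fintype.mem_piFinset] at hd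
    constructor
    · intro i j hij
      have := hd i
      rw [Fintype.mem_piFinset] at this
      have := this j
      rw [if_pos hij, Finset.mem_range] at this
      omega
    · intro i j hij
      have := hd i
      rw [Fintype.mem_piFinset] at this
      have := this j
      rw [if_neg hij, Finset.mem_singleton] at this
      exact this
  have hTle : ∀ d ∈ B', ∀ m : Fin W, T m d ≤ H := by
    intro d hd m
    have h1 : T m d ≤ ∑ _i : Fin W, ∑ _j : Fin W, K := by
      rw [hT]
      refine Finset.sum_le_sum fun i _ => Finset.sum_le_sum fun j _ => ?_
      by_cases h : i ≤ m ∧ m ≤ j ∧ i < j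
      · rw [if_pos h]; exact (hmemB' d hd).1 i j h.2.2
      · rw [if_neg h]; exact Nat.zero_le _
    have h2 : (∑ _i : Fin W, ∑ _j : Fin W, K) = W * W * K := by
      simp [Finset.sum_const, Finset.card_univ, mul_assoc]
    have h3 : W * W * K ≤ H := by
      rw [hK, mul_comm]
      exact Nat.div_mul_le_self H (W * W)
    omega
  have hmaps : ∀ d ∈ B', Φ d ∈ (kostant_finite W H).toFinset := by
    intro d hd
    rw [Set.Finite.mem_toFinset]
    constructor
    · intro i j hji
      rw [hΦ]
      simp only
      rw [if_neg (by exact fun h => absurd (lt_trans hji h) (lt_irrefl _)),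
        if_neg (by rintro rfl; exact absurd hji (lt_irrefl _))]
    · intro m
      have hsplit : ∀ i j : Fin W, (if i ≤ m ∧ m ≤ j then Φ d i j else 0)
          = (if i ≤ m ∧ m ≤ j ∧ i < j then d i j else 0)
            + (if i = m ∧ j = m then H - T m d else 0) := by
        intro i j
        rw [hΦ]
        simp only
        by_cases h1 : i ≤ m ∧ m ≤ j
        · rw [if_pos h1]
          by_cases h2 : i < j
          · rw [if_pos h2, if_pos ⟨h1.1, h1.2, h2⟩, if_neg (by
              rintro ⟨rfl, rfl⟩; exact absurd h2 (lt_irrefl _)), Nat.add_zero]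
          · have hij : i = j := le_antisymm (le_trans h1.1 h1.2) (not_lt.mp h2)
            have him : i = m := le_antisymm h1.1 (hij ▸ h1.2)
            subst hij
            subst him
            simp [lt_irrefl]
        · rw [if_neg h1, if_neg (fun h => h1 ⟨h.1, h.2.1⟩), if_neg (by
            rintro ⟨rfl, rfl⟩; exact h1 ⟨le_refl _, le_refl _⟩), Nat.add_zero]
      rw [Finset.sum_congr rfl fun i _ => Finset.sum_congr rfl fun j _ => hsplit i j]
      rw [Finset.sum_congr rfl fun i (_ : i ∈ Finset.univ) =>
        Finset.sum_add_distrib, Finset.sum_add_distrib]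
      have hA : (∑ i : Fin W, ∑ j : Fin W, (if i ≤ m ∧ m ≤ j ∧ i < j then d i j else 0))
          = T m d := by rw [hT]
      have hBsum : (∑ i : Fin W, ∑ j : Fin W, (if i = m ∧ j = m then H - T m d else 0))
          = H - T m d := by
        have : ∀ i : Fin W, (∑ j : Fin W, (if i = m ∧ j = m then H - T m d else 0))
            = if i = m then H - T m d else 0 := by
          intro i
          by_cases h : i = m
          · subst h
            simp
          · simp [h]
        rw [Finset.sum_congr rfl fun i _ => this i]
        simp
      rw [hA, hBsum]
      have := hTle d hd m
      show T m d + (H - T m d) = H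
      omega
  have hinj : Set.InjOn Φ B' := by
    intro d1 h1 d2 h2 heq
    funext i j
    by_cases h : i < j
    · have e1 : Φ d1 i j = d1 i j := by rw [hΦ]; simp only; rw [if_pos h]
      have e2 : Φ d2 i j = d2 i j := by rw [hΦ]; simp only; rw [if_pos h]
      rw [← e1, ← e2, heq]
    · rw [(hmemB' d1 h1).2 i j h, (hmemB' d2 h2).2 i j h]
  have hle := Finset.card_le_card_of_injOn Φ hmaps hinj
  rw [hcard] at hle
  rw [show KPF (fun _ : Fin W => H)
    = {c : Fin W → Fin W → ℕ | IsKostant (fun _ : Fin W => H) c}.ncard from rfl,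
    Set.ncard_eq_toFinset_card _ (kostant_finite W H)]
  exact hle

lemma kpf_upper (W H : ℕ) (t : ℝ) (ht : 0 < t)
    (hpos : 0 < KPF (fun _ : Fin W => H)) :
    Real.log (KPF (fun _ : Fin W => H)) ≤ t * W * H +
      ∑ i ∈ Finset.range W, ∑ k ∈ Finset.range (W - i),
        (t * ((k + 1 : ℕ) : ℝ) - Real.log (t * ((k + 1 : ℕ) : ℝ))) := by
  classical
  set S := (kostant_finite W H).toFinset with hS
  set ℓ : Fin W → Fin W → ℕ := fun i j => (Finset.Icc i j).card with hℓ
  set Tset : Fin W → Fin W → Finset ℕ :=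
    fun i j => if i ≤ j then Finset.range (H + 1) else {0} with hTset
  set B : Finset (Fin W → Fin W → ℕ) :=
    Fintype.piFinset fun i => Fintype.piFinset fun j => Tset i j with hB
  have hSB : S ⊆ B := by
    intro c hc
    rw [hS, Set.Finite.mem_toFinset] at hc
    rw [hB, Fintype.mem_piFinset]
    intro i
    rw [Fintype.mem_piFinset]
    intro j
    simp only [hTset]
    by_cases hij : i ≤ j
    · rw [if_pos hij, Finset.mem_range]
      exact Nat.lt_succ_of_le (isKostant_le hc i j)
    · rw [if_neg hij, Finset.mem_singleton]
      exact hc.1 i j (not_le.mp hij)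
  -- the summand
  set f : Fin W → Fin W → ℕ → ℝ := fun i j k => Real.exp (-(t * ((ℓ i j : ℝ) * k))) with hf
  have hterm : ∀ c : Fin W → Fin W → ℕ,
      Real.exp (t * (W : ℝ) * H - t * ((∑ i : Fin W, ∑ j : Fin W, ℓ i j * c i j : ℕ) : ℝ))
        = Real.exp (t * W * H) * ∏ i : Fin W, ∏ j : Fin W, f i j (c i j) := by
    intro c
    rw [hf]
    simp only
    rw [Finset.prod_congr rfl fun i (_ : i ∈ Finset.univ) =>
      (Real.exp_sum Finset.univ (fun j => -(t * ((ℓ i j : ℝ) * c i j)))).symm,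
      (Real.exp_sum Finset.univ (fun i => ∑ j : Fin W, -(t * ((ℓ i j : ℝ) * c i j)))).symm,
      ← Real.exp_add]
    congr 1
    rw [Finset.sum_congr rfl fun i (_ : i ∈ Finset.univ) => Finset.sum_neg_distrib _,
      Finset.sum_neg_distrib]
    push_cast
    rw [Finset.mul_sum]
    rw [Finset.sum_congr rfl fun i (_ : i ∈ Finset.univ) => (Finset.mul_sum _ _ t).symm]
    ring
  -- step: card ≤ sum over B
  have hcount : ((KPF (fun _ : Fin W => H) : ℝ)) ≤
      Real.exp (t * W * H) * ∑ c ∈ B, ∏ i : Fin W, ∏ j : Fin W, f i j (c i j) := by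
    have hKPF : (KPF (fun _ : Fin W => H) : ℝ) = ∑ _c ∈ S, (1 : ℝ) := by
      rw [show KPF (fun _ : Fin W => H)
        = {c : Fin W → Fin W → ℕ | IsKostant (fun _ : Fin W => H) c}.ncard from rfl,
        Set.ncard_eq_toFinset_card _ (kostant_finite W H)]
      rw [Finset.sum_const, nsmul_eq_mul, mul_one]
    rw [hKPF, Finset.mul_sum]
    have h1 : ∀ c ∈ S, (1 : ℝ) = Real.exp (t * W * H) *
        ∏ i : Fin W, ∏ j : Fin W, f i j (c i j) := by
      intro c hc
      rw [hS, Set.Finite.mem_toFinset] at hc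
      rw [← hterm c, weight_eq hc]
      push_cast
      rw [show t * (W:ℝ) * H - t * ((W:ℝ) * H) = 0 by ring, Real.exp_zero]
    rw [Finset.sum_congr rfl h1]
    refine Finset.sum_le_sum_of_subset_of_nonneg hSB fun c _ _ => ?_
    positivity
  -- factorization
  have hfact : ∑ c ∈ B, (∏ i : Fin W, ∏ j : Fin W, f i j (c i j))
      = ∏ i : Fin W, ∏ j : Fin W, ∑ k ∈ Tset i j, f i j k := by
    rw [Finset.prod_congr rfl fun i (_ : i ∈ Finset.univ) =>
      Finset.prod_univ_sum (fun j => Tset i j) (fun j k => f i j k)]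
    rw [Finset.prod_univ_sum (fun i => Fintype.piFinset fun j => Tset i j)
      (fun i r => ∏ j : Fin W, f i j (r j))]
  -- factor bound
  have hfac : ∀ i j : Fin W, (∑ k ∈ Tset i j, f i j k)
      ≤ Real.exp (if i ≤ j then
          t * ((j.val - i.val + 1 : ℕ) : ℝ) - Real.log (t * ((j.val - i.val + 1 : ℕ) : ℝ))
        else 0) := by
    intro i j
    rw [hTset, hf]
    simp only
    by_cases hij : i ≤ j
    · rw [if_pos hij, if_pos hij]
      set L : ℕ := j.val - i.val + 1 with hL
      have hℓL : ℓ i j = L := by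
        rw [hℓ]
        simp only
        rw [Fin.card_Icc]
        have : i.val ≤ j.val := hij
        omega
      set x : ℝ := t * (L : ℝ) with hx
      have hxpos : 0 < x := by
        have : (1:ℝ) ≤ (L:ℝ) := by exact_mod_cast Nat.one_le_iff_ne_zero.mpr (by omega)
        nlinarith
      set r : ℝ := Real.exp (-x) with hr
      have hr0 : 0 ≤ r := le_of_lt (Real.exp_pos _)
      have hr1 : r < 1 := Real.exp_lt_one_iff.mpr (by linarith)
      have hgeom : (∑ k ∈ Finset.range (H + 1), Real.exp (-(t * ((ℓ i j : ℝ) * k))))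
          ≤ (1 - r)⁻¹ := by
        have heq : ∀ k : ℕ, Real.exp (-(t * ((ℓ i j : ℝ) * k))) = r ^ k := by
          intro k
          rw [hr, ← Real.exp_nat_mul, hℓL, hx]
          congr 1
          push_cast
          ring
        rw [Finset.sum_congr rfl fun k _ => heq k]
        rw [← tsum_geometric_of_lt_one hr0 hr1]
        exact Summable.sum_le_tsum _ (fun k _ => pow_nonneg hr0 k)
          (summable_geometric_of_lt_one hr0 hr1)
      have hinv : (1 - r)⁻¹ ≤ Real.exp (x - Real.log x) := by
        have h1 : x + 1 ≤ Real.exp x := Real.add_one_le_exp x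
        have hxr : 0 < x * r := mul_pos hxpos (Real.exp_pos _)
        have h2 : x * r ≤ 1 - r := by
          rw [hr]
          have h3 : (x + 1) * Real.exp (-x) ≤ 1 := by
            rw [Real.exp_neg]
            calc (x + 1) * (Real.exp x)⁻¹ ≤ Real.exp x * (Real.exp x)⁻¹ :=
                mul_le_mul_of_nonneg_right h1 (inv_nonneg.mpr (le_of_lt (Real.exp_pos x)))
              _ = 1 := mul_inv_cancel₀ (ne_of_gt (Real.exp_pos x))
          nlinarith [Real.exp_pos (-x)]
        have h4 : (1 - r)⁻¹ ≤ (x * r)⁻¹ := by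
          apply inv_anti₀ hxr h2
        refine le_trans h4 ?_
        rw [Real.exp_sub, Real.exp_log hxpos, hr, Real.exp_neg]
        rw [mul_inv, inv_inv]
        rw [div_eq_mul_inv]
        rw [mul_comm]
      exact le_trans hgeom hinv
    · rw [if_neg hij, if_neg hij]
      simp
  -- combine
  have hprod : (∏ i : Fin W, ∏ j : Fin W, ∑ k ∈ Tset i j, f i j k)
      ≤ Real.exp (∑ i ∈ Finset.range W, ∑ k ∈ Finset.range (W - i),
          (t * ((k + 1 : ℕ) : ℝ) - Real.log (t * ((k + 1 : ℕ) : ℝ)))) := by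
    have step1 : (∏ i : Fin W, ∏ j : Fin W, ∑ k ∈ Tset i j, f i j k)
        ≤ ∏ i : Fin W, ∏ j : Fin W, Real.exp (if i ≤ j then
            t * ((j.val - i.val + 1 : ℕ) : ℝ) - Real.log (t * ((j.val - i.val + 1 : ℕ) : ℝ))
          else 0) := by
      refine Finset.prod_le_prod (fun i _ => Finset.prod_nonneg fun j _ =>
        Finset.sum_nonneg fun k _ => le_of_lt (Real.exp_pos _)) fun i _ => ?_
      exact Finset.prod_le_prod (fun j _ => Finset.sum_nonneg fun k _ =>
        le_of_lt (Real.exp_pos _)) fun j _ => hfac i j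
    refine le_trans step1 (le_of_eq ?_)
    rw [Finset.prod_congr rfl fun i (_ : i ∈ Finset.univ) =>
      (Real.exp_sum Finset.univ _).symm, (Real.exp_sum Finset.univ _).symm]
    congr 1
    exact pairSum W (fun n => t * (n : ℝ) - Real.log (t * (n : ℝ)))
  -- conclude
  rw [Real.log_le_iff_le_exp (by exact_mod_cast hpos), Real.exp_add]
  calc (KPF (fun _ : Fin W => H) : ℝ)
      ≤ Real.exp (t * W * H) * ∑ c ∈ B, ∏ i : Fin W, ∏ j : Fin W, f i j (c i j) := hcount
    _ = Real.exp (t * W * H) * ∏ i : Fin W, ∏ j : Fin W, ∑ k ∈ Tset i j, f i j k := by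
        rw [hfact]
    _ ≤ Real.exp (t * W * H) * Real.exp (∑ i ∈ Finset.range W, ∑ k ∈ Finset.range (W - i),
          (t * ((k + 1 : ℕ) : ℝ) - Real.log (t * ((k + 1 : ℕ) : ℝ)))) := by
        exact mul_le_mul_of_nonneg_left hprod (le_of_lt (Real.exp_pos _))

lemma est (W H : ℕ) (hW : 0 < W) (hH : 0 < H) (hWH : W * W ≤ H) :
    ∑ i ∈ Finset.range W, ∑ k ∈ Finset.range (W - i),
      ((W:ℝ)/H * ((k + 1 : ℕ) : ℝ) - Real.log ((W:ℝ)/H * ((k + 1 : ℕ) : ℝ)))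
    ≤ (∑ i ∈ Finset.range W, ((W - i : ℕ) : ℝ)) * (Real.log H - 2 * Real.log W)
      + 3 * (W:ℝ)^2 := by
  set t : ℝ := (W:ℝ)/H with htdef
  have ht : 0 < t := by positivity
  have hlogt : Real.log t = Real.log W - Real.log H := by
    rw [htdef, Real.log_div (by positivity) (by positivity)]
  -- per-i bound
  have peri : ∀ i ∈ Finset.range W,
      ∑ k ∈ Finset.range (W - i), (t * ((k + 1 : ℕ) : ℝ) - Real.log (t * ((k + 1 : ℕ) : ℝ)))
      ≤ ((W - i : ℕ) : ℝ) * (Real.log H - 2 * Real.log W) + 2 * ((W - i : ℕ) : ℝ) + W := by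
    intro i hi
    rw [Finset.mem_range] at hi
    set m : ℕ := W - i with hm
    have hm1 : 1 ≤ m := by omega
    have hmW : m ≤ W := by omega
    have hmr : (1:ℝ) ≤ (m:ℝ) := by exact_mod_cast hm1
    have hmWr : (m:ℝ) ≤ (W:ℝ) := by exact_mod_cast hmW
    have hsplit : ∀ k ∈ Finset.range m, t * ((k + 1 : ℕ) : ℝ) - Real.log (t * ((k + 1 : ℕ) : ℝ))
        = t * ((k:ℝ) + 1) - Real.log t - Real.log ((k:ℝ) + 1) := by
      intro k _
      rw [Real.log_mul (ne_of_gt ht) (by positivity)]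
      push_cast
      ring
    rw [Finset.sum_congr rfl hsplit]
    rw [Finset.sum_sub_distrib, Finset.sum_sub_distrib, Finset.sum_const, Finset.card_range,
      nsmul_eq_mul]
    have hA : ∑ k ∈ Finset.range m, t * ((k:ℝ) + 1) ≤ (m:ℝ) := by
      have hbd : ∀ k ∈ Finset.range m, t * ((k:ℝ) + 1) ≤ 1 := by
        intro k hk
        rw [Finset.mem_range] at hk
        have h1 : ((k:ℝ) + 1) ≤ (W:ℝ) := by
          have : (k:ℕ) + 1 ≤ W := by omega
          exact_mod_cast this
        have h2 : t * ((k:ℝ)+1) ≤ t * W := mul_le_mul_of_nonneg_left h1 (le_of_lt ht)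
        have h3 : t * (W:ℝ) ≤ 1 := by
          rw [htdef, div_mul_eq_mul_div, div_le_one (by positivity)]
          exact_mod_cast hWH
        linarith
      calc ∑ k ∈ Finset.range m, t * ((k:ℝ) + 1) ≤ ∑ _k ∈ Finset.range m, (1:ℝ) :=
          Finset.sum_le_sum hbd
        _ = (m:ℝ) := by simp
    have hC : (m:ℝ) * Real.log W - (W:ℝ) - (m:ℝ) ≤ ∑ k ∈ Finset.range m, Real.log ((k:ℝ) + 1) := by
      have h1 := sum_log_lb m
      have h2 := xlogWx_le (m:ℝ) (W:ℝ) (by linarith) hmWr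
      linarith
    have hlogt' : (m:ℝ) * Real.log t = (m:ℝ) * Real.log W - (m:ℝ) * Real.log H := by
      rw [hlogt]; ring
    linarith
  calc ∑ i ∈ Finset.range W, ∑ k ∈ Finset.range (W - i),
        (t * ((k + 1 : ℕ) : ℝ) - Real.log (t * ((k + 1 : ℕ) : ℝ)))
      ≤ ∑ i ∈ Finset.range W,
        (((W - i : ℕ) : ℝ) * (Real.log H - 2 * Real.log W) + 2 * ((W - i : ℕ) : ℝ) + W) :=
        Finset.sum_le_sum peri
    _ = (∑ i ∈ Finset.range W, ((W - i : ℕ) : ℝ)) * (Real.log H - 2 * Real.log W)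
        + 2 * (∑ i ∈ Finset.range W, ((W - i : ℕ) : ℝ)) + (W:ℝ) * W := by
        rw [Finset.sum_add_distrib, Finset.sum_add_distrib, Finset.sum_const, Finset.card_range,
          ← Finset.sum_mul, Finset.mul_sum]
        push_cast
        ring
    _ ≤ (∑ i ∈ Finset.range W, ((W - i : ℕ) : ℝ)) * (Real.log H - 2 * Real.log W)
        + 3 * (W:ℝ)^2 := by
        have hNr : (∑ i ∈ Finset.range W, ((W - i : ℕ) : ℝ)) ≤ (W:ℝ) * W := by
          calc (∑ i ∈ Finset.range W, ((W - i : ℕ) : ℝ))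
              ≤ ∑ _i ∈ Finset.range W, (W:ℝ) :=
                Finset.sum_le_sum fun i _ => by exact_mod_cast Nat.sub_le W i
            _ = (W:ℝ) * W := by rw [Finset.sum_const, Finset.card_range, nsmul_eq_mul]
        have hNr0 : (0:ℝ) ≤ ∑ i ∈ Finset.range W, ((W - i : ℕ) : ℝ) :=
          Finset.sum_nonneg fun i _ => by positivity
        have hsq : (W:ℝ)^2 = (W:ℝ)*W := pow_two (W:ℝ)
        linarith

lemma perN (W H : ℕ) (hW : 1 ≤ W) (hH : 1 ≤ H) (hWWH : W * W ≤ H)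
    (hq1 : 1 ≤ Real.log (Real.sqrt H / W)) :
    (1 - 1/(W:ℝ)) ≤ Lbox H W / ((W:ℝ)^2 * Real.log (Real.sqrt (H:ℝ) / W)) ∧
      Lbox H W / ((W:ℝ)^2 * Real.log (Real.sqrt (H:ℝ) / W))
        ≤ 1 + 1/(W:ℝ) + 4 / Real.log (Real.sqrt (H:ℝ) / W) := by
  have hWr : (1:ℝ) ≤ (W:ℝ) := by exact_mod_cast hW
  have hHr : (1:ℝ) ≤ (H:ℝ) := by exact_mod_cast hH
  have hWne : (W:ℝ) ≠ 0 := by positivity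
  have hHne : (H:ℝ) ≠ 0 := by positivity
  set q : ℝ := Real.log (Real.sqrt (H:ℝ) / W) with hqdef
  set G : ℝ := Real.log H - 2 * Real.log W with hGdef
  have hqG : G = 2 * q := by
    rw [hqdef, hGdef, Real.log_div (by positivity) hWne, Real.log_sqrt (by positivity)]
    ring
  have hq0 : 0 < q := lt_of_lt_of_le one_pos hq1
  have hT : 0 < (W:ℝ)^2 * q := by positivity
  -- positivity of KPF
  set D : ℕ := (Finset.univ.filter (fun p : Fin W × Fin W => p.1 < p.2)).card with hDdef
  set K : ℕ := H / (W * W) with hKdef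
  have hpos : 0 < KPF (fun _ : Fin W => H) :=
    lt_of_lt_of_le (Nat.one_le_pow D (K+1) (Nat.succ_pos K)) (kpf_lower W H)
  -- lower bound
  have hD2 : 2 * (D:ℝ) = (W:ℝ)^2 - W := by
    have h1 : D * 2 = W * W - W := cardLt W
    have h2 : W ≤ W * W := Nat.le_mul_of_pos_left W (by omega)
    have : ((D * 2 : ℕ) : ℝ) = ((W * W - W : ℕ) : ℝ) := by exact_mod_cast h1
    rw [Nat.cast_sub h2] at this
    push_cast at this
    nlinarith [this]
  have hlow : (D:ℝ) * G ≤ Lbox H W := by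
    have s1 : (((K+1) ^ D : ℕ) : ℝ) ≤ (KPF (fun _ : Fin W => H) : ℝ) := by
      exact_mod_cast kpf_lower W H
    have s2 : Real.log (((K+1) ^ D : ℕ) : ℝ) ≤ Lbox H W := by
      rw [Lbox]
      exact Real.log_le_log (by positivity) s1
    have s3 : Real.log (((K+1) ^ D : ℕ) : ℝ) = (D:ℝ) * Real.log ((K:ℝ)+1) := by
      push_cast
      rw [Real.log_pow]
    have s4 : G ≤ Real.log ((K:ℝ)+1) := by
      have h5 : (H:ℝ) < ((K:ℝ)+1) * ((W:ℝ)*W) := by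
        have hlt := Nat.mod_lt H (show 0 < W*W by positivity)
        have hn : H < (H / (W*W) + 1) * (W * W) := by
          calc H = W*W*(H/(W*W)) + H % (W*W) := (Nat.div_add_mod H (W*W)).symm
            _ < W*W*(H/(W*W)) + W*W := Nat.add_lt_add_left hlt _
            _ = (H/(W*W) + 1) * (W*W) := by ring
        exact_mod_cast hn
      have h6 : (H:ℝ)/((W:ℝ)*W) ≤ (K:ℝ)+1 := by
        rw [div_le_iff₀ (by positivity)]
        linarith
      calc G = Real.log ((H:ℝ)/((W:ℝ)*W)) := by
            rw [hGdef, Real.log_div hHne (by positivity), Real.log_mul hWne hWne]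
            ring
        _ ≤ Real.log ((K:ℝ)+1) := Real.log_le_log (by positivity) h6
    calc (D:ℝ) * G ≤ (D:ℝ) * Real.log ((K:ℝ)+1) :=
          mul_le_mul_of_nonneg_left s4 (by positivity)
      _ = Real.log (((K+1) ^ D : ℕ) : ℝ) := s3.symm
      _ ≤ Lbox H W := s2
  -- upper bound
  set Nr : ℝ := ∑ i ∈ Finset.range W, ((W - i : ℕ) : ℝ) with hNrdef
  have hN2 : 2 * Nr = (W:ℝ)^2 + W := by
    have h1 : (∑ i ∈ Finset.range W, (W - i)) * 2 = W * W + W := sumN W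
    have : ((∑ i ∈ Finset.range W, (W - i) : ℕ) : ℝ) * 2 = ((W * W + W : ℕ) : ℝ) := by
      exact_mod_cast h1
    rw [Nat.cast_sum] at this
    push_cast at this
    rw [hNrdef, pow_two]
    linarith [this]
  have hup : Lbox H W ≤ Nr * G + 4 * (W:ℝ)^2 := by
    have ht : (0:ℝ) < (W:ℝ)/H := by positivity
    have u1 := kpf_upper W H ((W:ℝ)/H) ht hpos
    have u2 := est W H (by omega) (by omega) hWWH
    have u3 : ((W:ℝ)/H) * W * H = (W:ℝ)^2 := by
      field_simp
    rw [Lbox]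
    calc Real.log (KPF (fun _ : Fin W => H)) ≤ ((W:ℝ)/H) * W * H +
          ∑ i ∈ Finset.range W, ∑ k ∈ Finset.range (W - i),
            (((W:ℝ)/H) * ((k + 1 : ℕ) : ℝ) - Real.log (((W:ℝ)/H) * ((k + 1 : ℕ) : ℝ))) := u1
      _ ≤ (W:ℝ)^2 + (Nr * G + 3 * (W:ℝ)^2) := by
          rw [u3]
          exact add_le_add le_rfl u2
      _ = Nr * G + 4 * (W:ℝ)^2 := by ring
  constructor
  · rw [le_div_iff₀ hT]
    have e1 : (1 - 1/(W:ℝ)) * ((W:ℝ)^2 * q) = ((W:ℝ)^2 - W) * q := by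
      field_simp
    have e2 : (D:ℝ) * G = ((W:ℝ)^2 - W) * q := by
      rw [hqG]
      linear_combination q * hD2
    linarith [hlow, e2.symm.le]
  · rw [div_le_iff₀ hT]
    have e1 : (1 + 1/(W:ℝ) + 4/q) * ((W:ℝ)^2 * q) = (W:ℝ)^2 * q + (W:ℝ) * q + 4 * (W:ℝ)^2 := by
      field_simp
    have e2 : Nr * G = ((W:ℝ)^2 + W) * q := by
      rw [hqG]
      linear_combination q * hN2
    rw [e1]
    nlinarith [hup, e2]


/-- If `h ≻ 1`, `w ≻ 1` and `w ≺ √h`, then `L[h,w] ∼ w²·ln(√h/w)`. -/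
theorem Lbox_asymp_narrow (h w : ℕ → ℕ)
    (hh : ∀ n, 0 < h n) (hw : ∀ n, 0 < w n)
    (hh1 : Tendsto (fun n => (1 : ℝ) / h n) atTop (nhds 0))
    (hw1 : Tendsto (fun n => (1 : ℝ) / w n) atTop (nhds 0))
    (hws : Tendsto (fun n => (w n : ℝ) / Real.sqrt (h n : ℝ)) atTop (nhds 0)) :
    Tendsto (fun n =>
        Lbox (h n) (w n) /
          ((w n : ℝ) ^ 2 * Real.log (Real.sqrt (h n : ℝ) / (w n : ℝ))))
      atTop (nhds 1) := by
  have hpos : ∀ n, 0 < (w n : ℝ) / Real.sqrt (h n : ℝ) := fun n =>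
    div_pos (by exact_mod_cast hw n) (Real.sqrt_pos.mpr (by exact_mod_cast hh n))
  have hws' : Tendsto (fun n => (w n : ℝ) / Real.sqrt (h n : ℝ)) atTop (nhdsWithin 0 (Set.Ioi 0)) :=
    tendsto_nhdsWithin_of_tendsto_nhds_of_eventually_within _ hws (Eventually.of_forall hpos)
  have hinv : Tendsto (fun n => ((w n : ℝ) / Real.sqrt (h n : ℝ))⁻¹) atTop atTop :=
    hws'.inv_tendsto_nhdsGT_zero
  have hfrac : Tendsto (fun n => Real.sqrt (h n : ℝ) / (w n : ℝ)) atTop atTop := by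
    simpa only [inv_div] using hinv
  have hqtop : Tendsto (fun n => Real.log (Real.sqrt (h n : ℝ) / (w n : ℝ))) atTop atTop :=
    Real.tendsto_log_atTop.comp hfrac
  have hqinv : Tendsto (fun n => 4 / Real.log (Real.sqrt (h n : ℝ) / (w n : ℝ))) atTop (nhds 0) :=
    Tendsto.div_atTop tendsto_const_nhds hqtop
  have ha : Tendsto (fun n => 1 - 1/(w n : ℝ)) atTop (nhds 1) := by
    have := tendsto_const_nhds (x := (1:ℝ)) (f := atTop (α := ℕ)) |>.sub hw1
    simpa using this
  have hb : Tendsto (fun n => 1 + 1/(w n : ℝ) + 4 / Real.log (Real.sqrt (h n : ℝ) / (w n : ℝ)))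
      atTop (nhds 1) := by
    have := (tendsto_const_nhds (x := (1:ℝ)) (f := atTop (α := ℕ)) |>.add hw1).add hqinv
    simpa using this
  have e1 : ∀ᶠ n in atTop, 1 ≤ Real.log (Real.sqrt (h n : ℝ) / (w n : ℝ)) :=
    hqtop.eventually_ge_atTop 1
  have e2 : ∀ᶠ n in atTop, w n * w n ≤ h n := by
    have hev := hws.eventually (gt_mem_nhds (by norm_num : (0:ℝ) < 1))
    filter_upwards [hev] with n hn
    have hsq : 0 < Real.sqrt (h n : ℝ) := Real.sqrt_pos.mpr (by exact_mod_cast hh n)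
    have h1 : (w n : ℝ) < Real.sqrt (h n : ℝ) := by
      rw [div_lt_one hsq] at hn
      exact hn
    have h2 : ((w n : ℝ)) * (w n : ℝ) < (h n : ℝ) := by
      have h3 : ((w n : ℝ))^2 < (Real.sqrt (h n : ℝ))^2 :=
        pow_lt_pow_left₀ h1 (by positivity) (by norm_num)
      rw [Real.sq_sqrt (by positivity)] at h3
      nlinarith [h3]
    have : ((w n * w n : ℕ) : ℝ) < ((h n : ℕ) : ℝ) := by push_cast; exact h2
    exact_mod_cast this.le
  apply tendsto_of_tendsto_of_tendsto_of_le_of_le' ha hb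
  · filter_upwards [e1, e2] with n h1 h2
    exact (perN (w n) (h n) (hw n) (hh n) h2 h1).1
  · filter_upwards [e1, e2] with n h1 h2
    exact (perN (w n) (h n) (hw n) (hh n) h2 h1).2
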